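/- For real x > 2, the function φ̃(x) = (2/x²) log(x+√(x²−4)) − log(x+√(x²−4)) + (1 − 2/x²) log 2 + √(x²−4)/(2x) is real and strictly negative. -/
import Mathlib


open Real

private lemma log_key (u : ℝ) (hu : 1 < u) : (u^2 - 1)/(u^2 + 1) < Real.log u := by
  have h0 : ∀ v : ℝ, 0 < v →
      HasDerivAt (fun v : ℝ => Real.log v - (v^2-1)/(v^2+1))
        (1/v - ((2*v)*(v^2+1) - (v^2-1)*(2*v))/((v^2+1)^2)) v := by
    intro v hv
    have hl : HasDerivAt Real.log (1/v) v := by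
      simpa [one_div] using Real.hasDerivAt_log (ne_of_gt hv)
    have hnum : HasDerivAt (fun v : ℝ => v^2 - 1) (2*v) v := by
      simpa using ((hasDerivAt_pow 2 v).sub_const 1)
    have hden : HasDerivAt (fun v : ℝ => v^2 + 1) (2*v) v := by
      simpa using ((hasDerivAt_pow 2 v).add_const 1)
    exact hl.sub (hnum.div hden (by positivity))
  have mono : StrictMonoOn (fun v : ℝ => Real.log v - (v^2-1)/(v^2+1)) (Set.Ici 1) := by
    apply strictMonoOn_of_deriv_pos (convex_Ici 1)
    · apply ContinuousOn.sub
      · exact Real.continuousOn_log.mono (by intro v hv; simp at hv ⊢; linarith)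
      · apply ContinuousOn.div (by fun_prop) (by fun_prop)
        intro v hv; positivity
    · intro v hv
      rw [interior_Ici] at hv
      have hv1 : (1:ℝ) < v := hv
      have hv0 : (0:ℝ) < v := by linarith
      rw [(h0 v hv0).deriv]
      rw [sub_pos, div_lt_div_iff₀ (by positivity) (by positivity)]
      nlinarith [sq_nonneg (v^2 - 1), sq_nonneg v, sq_nonneg (v-1), sq_nonneg (v+1)]
  have := mono (Set.self_mem_Ici) (Set.mem_Ici.mpr hu.le) hu
  simp at this
  linarith

theorem phiTilde_neg_on_saturated (x : ℝ) (hx : 2 < x) :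
    2 / x ^ 2 * Real.log (x + Real.sqrt (x ^ 2 - 4))
      - Real.log (x + Real.sqrt (x ^ 2 - 4))
      + (1 - 2 / x ^ 2) * Real.log 2
      + Real.sqrt (x ^ 2 - 4) / (2 * x) < 0 := by
  have hx0 : (0:ℝ) < x := by linarith
  have hx4 : (0:ℝ) < x^2 - 4 := by nlinarith
  set s := Real.sqrt (x^2 - 4) with hs
  have hs0 : 0 < s := Real.sqrt_pos.mpr hx4
  have hs2 : s^2 = x^2 - 4 := Real.sq_sqrt hx4.le
  set u := (x + s)/2 with hu
  have hu1 : 1 < u := by rw [hu]; linarith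
  have hu0 : 0 < u := by linarith
  have hlog : Real.log u = Real.log (x + s) - Real.log 2 := by
    rw [hu, Real.log_div (by linarith) (by norm_num)]
  have hratio : s / x = (u^2 - 1)/(u^2 + 1) := by
    rw [hu]
    rw [div_eq_div_iff (ne_of_gt hx0) (by positivity)]
    field_simp
    nlinarith [hs2]
  have hkey : s / x < Real.log u := hratio ▸ log_key u hu1
  have hlogu0 : 0 < Real.log u := lt_trans (by positivity) hkey
  have hfrac : 2 / x^2 < 1/2 := by
    rw [div_lt_div_iff₀ (by positivity) (by norm_num)]; nlinarith
  have hE : 2 / x ^ 2 * Real.log (x + s) - Real.log (x + s) + (1 - 2 / x ^ 2) * Real.log 2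
      + s / (2 * x) = s/(2*x) - (1 - 2/x^2) * Real.log u := by
    rw [hlog]; ring
  rw [hE]
  have h1 : (1 - 2/x^2) * Real.log u > (1/2) * Real.log u := by
    apply mul_lt_mul_of_pos_right _ hlogu0
    linarith
  have h2 : (1/2) * Real.log u > (1/2) * (s/x) := by linarith
  have : s/(2*x) = (1/2)*(s/x) := by ring
  linarith
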